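/- Let A be a positive definite hermitian n×n matrix and ρ a positive semidefinite n×n matrix. Then the matrix L_A(ρ) is positive semidefinite; moreover, if ρ is positive definite then L_A(ρ) is positive definite. -/

import Mathlib

open Matrix
open scoped ComplexOrder

noncomputable def traceNorm {ι : Type*} [Fintype ι] [DecidableEq ι]
    (A : Matrix ι ι ℂ) : ℝ :=
  (((Matrix.posSemidef_conjTranspose_mul_self A).1.eigenvectorUnitary.1 *
      Matrix.diagonal ((fun x : ℝ => (x : ℂ)) ∘ Real.sqrt ∘ (Matrix.posSemidef_conjTranspose_mul_self A).1.eigenvalues) *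
      (star (Matrix.posSemidef_conjTranspose_mul_self A).1.eigenvectorUnitary : Matrix ι ι ℂ)).trace).re

noncomputable def mfun {ι : Type*} [Fintype ι] [DecidableEq ι] (g : ℝ → ℝ)
    (A : Matrix ι ι ℂ) : Matrix ι ι ℂ :=
  if hA : A.IsHermitian then
    (hA.eigenvectorUnitary : Matrix ι ι ℂ) *
      Matrix.diagonal (fun i => (g (hA.eigenvalues i) : ℂ)) *
      (star hA.eigenvectorUnitary : Matrix ι ι ℂ)
  else 0

noncomputable def divDiff {ι : Type*} (g : ℝ → ℝ) (a : ι → ℝ) : Matrix ι ι ℝ :=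
  Matrix.of fun i j =>
    if a i = a j then deriv g (a i) else (g (a i) - g (a j)) / (a i - a j)

noncomputable def Dop {ι : Type*} [Fintype ι] [DecidableEq ι] (g : ℝ → ℝ)
    {A : Matrix ι ι ℂ} (hA : A.IsHermitian) (B : Matrix ι ι ℂ) : Matrix ι ι ℂ :=
  (hA.eigenvectorUnitary : Matrix ι ι ℂ) *
    (((divDiff g hA.eigenvalues).map Complex.ofReal) ⊙
      ((star hA.eigenvectorUnitary : Matrix ι ι ℂ) * B *
        (hA.eigenvectorUnitary : Matrix ι ι ℂ))) *
    (star hA.eigenvectorUnitary : Matrix ι ι ℂ)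

noncomputable def relEnt {ι : Type*} [Fintype ι] [DecidableEq ι]
    (ρ σ : Matrix ι ι ℂ) : ℝ :=
  ((ρ * (mfun Real.log ρ - mfun Real.log σ)).trace).re

def ptrans {m n : Type*} (A : Matrix (m × n) (m × n) ℂ) : Matrix (m × n) (m × n) ℂ :=
  Matrix.of fun p q => A (p.1, q.2) (q.1, p.2)

section LopAux
open MeasureTheory Set Filter

lemma inv_tendsto_zero (a : ℝ) : Tendsto (fun s : ℝ => (a+s)⁻¹) atTop (nhds 0) :=
  tendsto_inv_atTop_zero.comp (tendsto_atTop_add_const_left _ a tendsto_id)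

lemma hasDerivAt_neg_inv (a s : ℝ) (h : a + s ≠ 0) :
    HasDerivAt (fun t : ℝ => -(a+t)⁻¹) ((a+s)⁻¹ * (a+s)⁻¹) s := by
  have h1 : HasDerivAt (fun t : ℝ => a + t) 1 s := (hasDerivAt_id s).const_add a
  have h2 := (h1.inv h).neg
  refine h2.congr_deriv ?_
  field_simp

lemma key_eq (a s : ℝ) (h : a + s ≠ 0) (b : ℝ) (hb : b + s ≠ 0) (hab : a ≠ b) :
    HasDerivAt (fun t : ℝ => (a-b)⁻¹ * (Real.log (b+t) - Real.log (a+t)))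
      ((a+s)⁻¹ * (b+s)⁻¹) s := by
  have h1 : HasDerivAt (fun t : ℝ => Real.log (b+t)) ((b+s)⁻¹) s := by
    simpa [Function.comp_def] using (Real.hasDerivAt_log hb).comp s ((hasDerivAt_id s).const_add b)
  have h2 : HasDerivAt (fun t : ℝ => Real.log (a+t)) ((a+s)⁻¹) s := by
    simpa [Function.comp_def] using (Real.hasDerivAt_log h).comp s ((hasDerivAt_id s).const_add a)
  have h3 := ((h1.sub h2).const_mul ((a-b)⁻¹))
  refine h3.congr_deriv ?_
  have : a - b ≠ 0 := sub_ne_zero.mpr hab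
  field_simp
  ring

lemma log_ratio_tendsto (a b : ℝ) :
    Tendsto (fun s : ℝ => Real.log (b+s) - Real.log (a+s)) atTop (nhds 0) := by
  have h1 : Tendsto (fun s : ℝ => 1 + (b-a) * (a+s)⁻¹) atTop (nhds 1) := by
    have := (inv_tendsto_zero a).const_mul (b-a)
    simpa using (tendsto_const_nhds (x := (1:ℝ))).add this
  have h2 : Tendsto (fun s : ℝ => Real.log (1 + (b-a) * (a+s)⁻¹)) atTop (nhds 0) := by
    have := (Real.continuousAt_log (x := 1) one_ne_zero).tendsto.comp h1
    simpa [Function.comp_def] using this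
  refine h2.congr' ?_
  filter_upwards [Filter.eventually_gt_atTop (max (-a) (-b))] with s hs
  have ha : 0 < a + s := by have := (max_lt_iff.mp hs).1; linarith
  have hb : 0 < b + s := by have := (max_lt_iff.mp hs).2; linarith
  have : 1 + (b-a) * (a+s)⁻¹ = (b+s)/(a+s) := by field_simp; ring
  rw [this, Real.log_div hb.ne' ha.ne']

lemma key_int (a b : ℝ) (ha : 0 < a) (hb : 0 < b) :
    IntegrableOn (fun s => (a+s)⁻¹ * (b+s)⁻¹) (Set.Ioi (0:ℝ)) ∧
    ∫ s in Set.Ioi (0:ℝ), (a+s)⁻¹ * (b+s)⁻¹ =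
      (if a = b then a⁻¹ else (Real.log a - Real.log b)/(a-b)) := by
  have hpos : ∀ s ∈ Ici (0:ℝ), 0 < a + s ∧ 0 < b + s :=
    fun s hs => ⟨by linarith [hs.out], by linarith [hs.out]⟩
  by_cases hab : a = b
  · subst hab
    have hderiv : ∀ s ∈ Ici (0:ℝ), HasDerivAt (fun t : ℝ => -(a+t)⁻¹) ((a+s)⁻¹ * (a+s)⁻¹) s :=
      fun s hs => hasDerivAt_neg_inv a s (hpos s hs).1.ne'
    have hnn : ∀ s ∈ Ioi (0:ℝ), 0 ≤ (a+s)⁻¹ * (a+s)⁻¹ := fun s hs =>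
      mul_nonneg (inv_nonneg.mpr (hpos s hs.out.le).1.le) (inv_nonneg.mpr (hpos s hs.out.le).1.le)
    have hlim : Tendsto (fun t : ℝ => -(a+t)⁻¹) atTop (nhds 0) := by
      simpa using (inv_tendsto_zero a).neg
    refine ⟨integrableOn_Ioi_deriv_of_nonneg' hderiv hnn hlim, ?_⟩
    rw [integral_Ioi_of_hasDerivAt_of_nonneg' hderiv hnn hlim]
    simp
  · have hderiv : ∀ s ∈ Ici (0:ℝ), HasDerivAt
        (fun t : ℝ => (a-b)⁻¹ * (Real.log (b+t) - Real.log (a+t))) ((a+s)⁻¹ * (b+s)⁻¹) s :=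
      fun s hs => key_eq a s (hpos s hs).1.ne' b (hpos s hs).2.ne' hab
    have hnn : ∀ s ∈ Ioi (0:ℝ), 0 ≤ (a+s)⁻¹ * (b+s)⁻¹ := fun s hs =>
      mul_nonneg (inv_nonneg.mpr (hpos s hs.out.le).1.le) (inv_nonneg.mpr (hpos s hs.out.le).2.le)
    have hlim : Tendsto (fun t : ℝ => (a-b)⁻¹ * (Real.log (b+t) - Real.log (a+t)))
        atTop (nhds 0) := by
      simpa using (log_ratio_tendsto a b).const_mul (a-b)⁻¹
    refine ⟨integrableOn_Ioi_deriv_of_nonneg' hderiv hnn hlim, ?_⟩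
    rw [integral_Ioi_of_hasDerivAt_of_nonneg' hderiv hnn hlim, if_neg hab]
    have : a - b ≠ 0 := sub_ne_zero.mpr hab
    field_simp
    simp

lemma divDiff_log_eq {ι : Type*} (a : ι → ℝ) (ha : ∀ i, 0 < a i) (i j : ι) :
    divDiff Real.log a i j = ∫ s in Set.Ioi (0:ℝ), (a i + s)⁻¹ * (a j + s)⁻¹ := by
  rw [(key_int (a i) (a j) (ha i) (ha j)).2]
  simp only [divDiff, Matrix.of_apply]
  split <;> simp [Real.deriv_log]

lemma hadamard_divDiff_posSemidef {N : ℕ} (a : Fin N → ℝ) (ha : ∀ i, 0 < a i)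
    (M : Matrix (Fin N) (Fin N) ℂ) (hM : M.PosSemidef) :
    (((divDiff Real.log a).map Complex.ofReal) ⊙ M).PosSemidef ∧
      (M.PosDef → (((divDiff Real.log a).map Complex.ofReal) ⊙ M).PosDef) := by
  set T := divDiff Real.log a with hT
  set H := (T.map Complex.ofReal) ⊙ M with hH
  have hint : ∀ i j : Fin N, IntegrableOn (fun s => (a i+s)⁻¹*(a j+s)⁻¹) (Ioi (0:ℝ)) :=
    fun i j => (key_int _ _ (ha i) (ha j)).1
  -- Hermitian
  have hTsym : ∀ i j, T i j = T j i := by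
    intro i j
    rw [hT, divDiff_log_eq a ha i j, divDiff_log_eq a ha j i]
    simp_rw [mul_comm]
  have hHerm : H.IsHermitian := by
    ext i j
    simp only [hH, conjTranspose_apply, hadamard_apply, Matrix.map_apply, star_mul',
      Complex.star_def, Complex.conj_ofReal]
    have hm : (starRingEnd ℂ) (M j i) = M i j := by
      have h2 := congrFun (congrFun hM.1 i) j
      simpa [conjTranspose_apply, Complex.star_def] using h2
    rw [hm, hTsym j i, mul_comm]
  -- quadratic form as integral
  have hquad : ∀ x : Fin N → ℂ,
      star x ⬝ᵥ (H *ᵥ x) = ∫ s in Ioi (0:ℝ),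
        star (fun i => ((a i + s)⁻¹ : ℝ) • x i) ⬝ᵥ
          (M *ᵥ (fun i => ((a i + s)⁻¹ : ℝ) • x i)) := by
    intro x
    have step1 : star x ⬝ᵥ (H *ᵥ x)
        = ∑ i, ∑ j, ((T i j : ℂ)) * ((starRingEnd ℂ) (x i) * M i j * x j) := by
      simp only [dotProduct, mulVec, hH, hadamard_apply, Matrix.map_apply, Finset.mul_sum,
        Pi.star_apply, Complex.star_def]
      refine Finset.sum_congr rfl fun i _ => Finset.sum_congr rfl fun j _ => ?_
      ring
    rw [step1]
    have step2 : ∀ i j : Fin N, ((T i j : ℂ)) * ((starRingEnd ℂ) (x i) * M i j * x j)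
        = ∫ s in Ioi (0:ℝ), ((a i+s)⁻¹*(a j+s)⁻¹) • ((starRingEnd ℂ) (x i) * M i j * x j) := by
      intro i j
      rw [hT, divDiff_log_eq a ha i j, ← Complex.real_smul, ← integral_smul_const]
    simp_rw [step2]
    have step3 : ∀ i : Fin N, (∑ j, ∫ s in Ioi (0:ℝ),
          ((a i+s)⁻¹*(a j+s)⁻¹) • ((starRingEnd ℂ) (x i) * M i j * x j))
        = ∫ s in Ioi (0:ℝ), ∑ j,
          ((a i+s)⁻¹*(a j+s)⁻¹) • ((starRingEnd ℂ) (x i) * M i j * x j) :=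
      fun i => (integral_finset_sum _ (fun j _ => ((hint i j).smul_const _))).symm
    simp_rw [step3]
    rw [← integral_finset_sum _ (fun i _ => integrable_finset_sum _
      (fun j _ => ((hint i j).smul_const _)))]
    refine setIntegral_congr_fun measurableSet_Ioi (fun s _ => ?_)
    simp only [dotProduct, mulVec, Pi.star_apply, star_smul, Finset.mul_sum, Finset.smul_sum,
      star_trivial, smul_eq_mul, Complex.real_smul, Complex.ofReal_mul, Complex.star_def,
      _root_.map_mul, Complex.conj_ofReal]
    refine Finset.sum_congr rfl fun i _ => Finset.sum_congr rfl fun j _ => ?_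
    push_cast
    ring
  -- real part nonneg etc.
  have hQint : ∀ x : Fin N → ℂ, IntegrableOn (fun s =>
      star (fun i => ((a i + s)⁻¹ : ℝ) • x i) ⬝ᵥ
        (M *ᵥ (fun i => ((a i + s)⁻¹ : ℝ) • x i))) (Ioi (0:ℝ)) := by
    intro x
    have : (fun s => star (fun i => ((a i + s)⁻¹ : ℝ) • x i) ⬝ᵥ
        (M *ᵥ (fun i => ((a i + s)⁻¹ : ℝ) • x i)))
        = fun s => ∑ i, ∑ j, ((a i+s)⁻¹*(a j+s)⁻¹) • ((starRingEnd ℂ) (x i) * M i j * x j) := by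
      funext s
      simp only [dotProduct, mulVec, Pi.star_apply, star_smul, Finset.mul_sum, Finset.smul_sum,
        star_trivial, smul_eq_mul, Complex.real_smul, Complex.ofReal_mul, Complex.star_def,
        _root_.map_mul, Complex.conj_ofReal]
      refine Finset.sum_congr rfl fun i _ => Finset.sum_congr rfl fun j _ => ?_
      push_cast
      ring
    rw [this]
    exact integrable_finset_sum _ (fun i _ => integrable_finset_sum _
      (fun j _ => ((hint i j).smul_const _)))
  have him : ∀ x : Fin N → ℂ, (star x ⬝ᵥ (H *ᵥ x)).im = 0 := by
    intro x
    have h1 : star (star x ⬝ᵥ (H *ᵥ x)) = star x ⬝ᵥ (H *ᵥ x) := by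
      conv_lhs => rw [← star_dotProduct, star_mulVec, ← dotProduct_mulVec, hHerm.eq]
    exact Complex.conj_eq_iff_im.mp h1
  constructor
  · refine PosSemidef.of_dotProduct_mulVec_nonneg hHerm (fun x => ?_)
    rw [Complex.le_def]
    refine ⟨?_, by simpa using (him x).symm⟩
    simp only [Complex.zero_re]
    have hre := integral_re (hQint x)
    simp only [RCLike.re_to_complex] at hre
    rw [hquad x, ← hre]
    refine setIntegral_nonneg measurableSet_Ioi (fun s _ => ?_)
    have := hM.dotProduct_mulVec_nonneg (fun i => ((a i + s)⁻¹ : ℝ) • x i)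
    rw [Complex.le_def] at this
    simpa using this.1
  · intro hMd
    refine PosDef.of_dotProduct_mulVec_pos hHerm (fun x hx => ?_)
    rw [Complex.lt_def]
    refine ⟨?_, by simpa using (him x).symm⟩
    simp only [Complex.zero_re]
    have hre := integral_re (hQint x)
    simp only [RCLike.re_to_complex] at hre
    rw [hquad x, ← hre]
    set f : ℝ → ℝ := fun s => (star (fun i => ((a i + s)⁻¹ : ℝ) • x i) ⬝ᵥ
        (M *ᵥ (fun i => ((a i + s)⁻¹ : ℝ) • x i))).re with hf
    have hfpos : ∀ s ∈ Ioi (0:ℝ), 0 < f s := by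
      intro s hs
      have hy : (fun i => ((a i + s)⁻¹ : ℝ) • x i) ≠ 0 := by
        obtain ⟨i, hi⟩ := Function.ne_iff.mp hx
        refine Function.ne_iff.mpr ⟨i, ?_⟩
        simp only [Pi.zero_apply] at hi ⊢
        have h0 : (a i + s) ≠ 0 := by have := ha i; have := hs.out; positivity
        exact smul_ne_zero (inv_ne_zero h0) hi
      have h3 := hMd.dotProduct_mulVec_pos hy
      rw [Complex.lt_def] at h3
      simpa only [Complex.zero_re] using h3.1
    have hfnn : 0 ≤ᵐ[volume.restrict (Ioi (0:ℝ))] f := by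
      filter_upwards [ae_restrict_mem measurableSet_Ioi] with s hs
      exact (hfpos s hs).le
    have hfint : IntegrableOn f (Ioi (0:ℝ)) := (hQint x).re
    refine (setIntegral_pos_iff_support_of_nonneg_ae hfnn hfint).mpr ?_
    have hsub : Ioi (0:ℝ) ⊆ Function.support f := fun s hs => (hfpos s hs).ne'
    have : Function.support f ∩ Ioi (0:ℝ) = Ioi (0:ℝ) := Set.inter_eq_right.mpr hsub
    rw [this]
    simp [Real.volume_Ioi]

lemma posDef_conj_unitary {n : Type*} [Fintype n] [DecidableEq n]
    {X : Matrix n n ℂ} (hX : X.PosDef) (U : Matrix n n ℂ) (hU : U * Uᴴ = 1) :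
    (U * X * Uᴴ).PosDef := by
  refine PosDef.of_dotProduct_mulVec_pos (hX.posSemidef.mul_mul_conjTranspose_same U).1 (fun x hx => ?_)
  have keyv : Uᴴ *ᵥ x ≠ 0 := by
    intro h
    apply hx
    have h2 : U *ᵥ (Uᴴ *ᵥ x) = x := by rw [mulVec_mulVec, hU, one_mulVec]
    rw [h, mulVec_zero] at h2
    exact h2.symm
  have := hX.dotProduct_mulVec_pos keyv
  simpa only [star_mulVec, dotProduct_mulVec, vecMul_vecMul, conjTranspose_conjTranspose,
    Matrix.mul_assoc] using this

end LopAux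

theorem Lop_posSemidef
    {N : ℕ} (A ρ : Matrix (Fin N) (Fin N) ℂ) (hA : A.PosDef) (hρ : ρ.PosSemidef) :
    (Dop Real.log hA.1 ρ).PosSemidef ∧
      (ρ.PosDef → (Dop Real.log hA.1 ρ).PosDef) := by
  set U : Matrix (Fin N) (Fin N) ℂ := (hA.1.eigenvectorUnitary : Matrix (Fin N) (Fin N) ℂ)
    with hU
  have hstar : (star hA.1.eigenvectorUnitary : Matrix (Fin N) (Fin N) ℂ) = Uᴴ :=
    Matrix.star_eq_conjTranspose _
  have hUU : U * Uᴴ = 1 := by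
    rw [← hstar, hU]
    exact Unitary.coe_mul_star_self _
  have hUU2 : Uᴴ * U = 1 := by
    rw [← hstar, hU]
    exact Unitary.coe_star_mul_self _
  have hDop : Dop Real.log hA.1 ρ =
      U * (((divDiff Real.log hA.1.eigenvalues).map Complex.ofReal) ⊙
        (Uᴴ * ρ * U)) * Uᴴ := by
    rw [Dop, hstar, hU]
  have haev : ∀ i, 0 < hA.1.eigenvalues i := fun i => hA.eigenvalues_pos i
  have hM : (Uᴴ * ρ * U).PosSemidef := hρ.conjTranspose_mul_mul_same U
  obtain ⟨hPSD, hPD⟩ := hadamard_divDiff_posSemidef hA.1.eigenvalues haev (Uᴴ * ρ * U) hM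
  constructor
  · rw [hDop]
    exact hPSD.mul_mul_conjTranspose_same U
  · intro hρd
    rw [hDop]
    have hMd : (Uᴴ * ρ * U).PosDef := by
      have := posDef_conj_unitary hρd Uᴴ (by rwa [conjTranspose_conjTranspose])
      rwa [conjTranspose_conjTranspose] at this
    exact posDef_conj_unitary (hPD hMd) U hUU
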